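/- Let T > 0 and let w₁, w₂ : ℝ → ℝ be continuous. Then ∫₀ᵀ I₁[w₁](t) · I₁[w₂](t) dt = ∫₀ᵀ I₂[w₁](t) · w₂(t) dt. -/

import Mathlib

/-- The time integral operator I₁ from the paper. -/
noncomputable def I1 (T : ℝ) (w : ℝ → ℝ) (t : ℝ) : ℝ :=
  (∫ s in (0 : ℝ)..t, w s) - (1 / T) * ∫ s in (0 : ℝ)..T, (T - s) * w s

/-- The time integral operator I₂ from the paper. -/
noncomputable def I2 (T : ℝ) (w : ℝ → ℝ) (t : ℝ) : ℝ :=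
  (-∫ s in (0 : ℝ)..t, (t - s) * w s) + (t / T) * ∫ s in (0 : ℝ)..T, (T - s) * w s

private lemma prim_hasDerivAt {w : ℝ → ℝ} (hw : Continuous w) (t : ℝ) :
    HasDerivAt (fun t => ∫ s in (0:ℝ)..t, w s) (w t) t :=
  (hw.integral_hasStrictDerivAt 0 t).hasDerivAt

private lemma prim_cont {w : ℝ → ℝ} (hw : Continuous w) :
    Continuous (fun t => ∫ s in (0:ℝ)..t, w s) := by
  have : Differentiable ℝ (fun t => ∫ s in (0:ℝ)..t, w s) :=
    fun t => (prim_hasDerivAt hw t).differentiableAt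
  exact this.continuous

private lemma I2_eq (T : ℝ) (w : ℝ → ℝ) (hw : Continuous w) :
    I2 T w = fun t => -(t * (∫ s in (0:ℝ)..t, w s) - ∫ s in (0:ℝ)..t, s * w s)
      + (t / T) * ∫ s in (0 : ℝ)..T, (T - s) * w s := by
  funext t
  unfold I2
  congr 2
  rw [← intervalIntegral.integral_const_mul, ← intervalIntegral.integral_sub
    (by exact (continuous_const.mul hw).intervalIntegrable _ _)
    (by exact (continuous_id.mul hw).intervalIntegrable _ _)]
  congr 1; funext s; ring

private lemma I1_hasDerivAt (T : ℝ) {w : ℝ → ℝ} (hw : Continuous w) (t : ℝ) :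
    HasDerivAt (I1 T w) (w t) t := by
  unfold I1
  simpa using (prim_hasDerivAt hw t).sub_const ((1 / T) * ∫ s in (0 : ℝ)..T, (T - s) * w s)

private lemma I1_cont (T : ℝ) {w : ℝ → ℝ} (hw : Continuous w) : Continuous (I1 T w) := by
  unfold I1
  exact (prim_cont hw).sub continuous_const

private lemma I2_hasDerivAt (T : ℝ) {w : ℝ → ℝ} (hw : Continuous w) (t : ℝ) :
    HasDerivAt (I2 T w) (-(I1 T w t)) t := by
  rw [I2_eq T w hw]
  have h1 : HasDerivAt (fun t : ℝ => t * (∫ s in (0:ℝ)..t, w s))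
      ((∫ s in (0:ℝ)..t, w s) + t * w t) t := by
    simpa using (hasDerivAt_id t).fun_mul (prim_hasDerivAt hw t)
  have h2 := prim_hasDerivAt (continuous_id.mul hw) t
  have h3 : HasDerivAt (fun t : ℝ => (t / T) * ∫ s in (0 : ℝ)..T, (T - s) * w s)
      ((1 / T) * ∫ s in (0 : ℝ)..T, (T - s) * w s) t := by
    simpa [div_eq_mul_inv] using
      ((hasDerivAt_id t).div_const T).mul_const (∫ s in (0 : ℝ)..T, (T - s) * w s)
  have h := ((h1.fun_sub h2).fun_neg).fun_add h3
  refine h.congr_deriv ?_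
  simp only [id_eq, Pi.mul_apply, I1]; ring

private lemma I2_cont (T : ℝ) {w : ℝ → ℝ} (hw : Continuous w) : Continuous (I2 T w) := by
  have : Differentiable ℝ (I2 T w) := fun t => (I2_hasDerivAt T hw t).differentiableAt
  exact this.continuous

private lemma I2_zero (T : ℝ) (w : ℝ → ℝ) : I2 T w 0 = 0 := by
  simp [I2]

private lemma I2_T (T : ℝ) (hT : 0 < T) (w : ℝ → ℝ) : I2 T w T = 0 := by
  simp [I2, div_self hT.ne']

/-- ∫₀ᵀ I₁[w₁] I₁[w₂] dt = ∫₀ᵀ I₂[w₁] w₂ dt. -/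
theorem time_integral_operators_adjoint_identity (T : ℝ) (hT : 0 < T)
    (w₁ w₂ : ℝ → ℝ) (hw₁ : Continuous w₁) (hw₂ : Continuous w₂) :
    (∫ t in (0 : ℝ)..T, I1 T w₁ t * I1 T w₂ t)
      = ∫ t in (0 : ℝ)..T, I2 T w₁ t * w₂ t := by
  have hderiv : ∀ t ∈ Set.uIcc (0:ℝ) T,
      HasDerivAt (fun t => I2 T w₁ t * I1 T w₂ t)
        (-(I1 T w₁ t * I1 T w₂ t) + I2 T w₁ t * w₂ t) t := by
    intro t _
    have := (I2_hasDerivAt T hw₁ t).fun_mul (I1_hasDerivAt T hw₂ t)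
    refine this.congr_deriv ?_
    ring
  have hcont : Continuous (fun t => -(I1 T w₁ t * I1 T w₂ t) + I2 T w₁ t * w₂ t) :=
    (((I1_cont T hw₁).mul (I1_cont T hw₂)).neg).add ((I2_cont T hw₁).mul hw₂)
  have key := intervalIntegral.integral_eq_sub_of_hasDerivAt hderiv
    (hcont.intervalIntegrable _ _)
  rw [I2_T T hT w₁, I2_zero T w₁, zero_mul, zero_mul, sub_zero] at key
  rw [intervalIntegral.integral_add (f := fun t => -(I1 T w₁ t * I1 T w₂ t)) (g := fun t => I2 T w₁ t * w₂ t)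
      (((((I1_cont T hw₁).mul (I1_cont T hw₂)).neg)).intervalIntegrable _ _)
      (((I2_cont T hw₁).mul hw₂).intervalIntegrable _ _),
    intervalIntegral.integral_neg] at key
  linarith
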